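/- Time-integral bound for the heat-regularized cutoff kernels (Lemma 5.2): There exists a constant C > 0 such that for every k_F ∈ (0,1], every L ≥ 1/k_F, and all functions w, η : Λ*_L → [0,1] with w(k) = 0 unless k_F + k_F^{3/2} ≤ |k| ≤ 3 k_F and η(k) = 0 unless |k| ≤ k_F − k_F^{3/2}, one has ∫₀^∞ [ (1/L³) ∑_{k ∈ Λ*_L} w(k)² e^{−2t(|k|² − k_F²)} ]^{1/2} · [ (1/L³) ∑_{k ∈ Λ*_L} η(k)² e^{−2t(k_F² − |k|²)} ]^{1/2} dt ≤ C k_F^{1/2}. (With ρ := k_F³ this is the bound C ρ^{1/6} stated in the paper.) -/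

import Mathlib

/-!
Time-integral bound for the heat-regularized cutoff kernels (Lemma 5.2):
there is `C > 0` such that for every `k_F ∈ (0,1]`, every `L ≥ 1/k_F` and all
`w, η : Λ*_L → [0,1]` supported respectively in
`{k_F + k_F^{3/2} ≤ |k| ≤ 3k_F}` and `{|k| ≤ k_F − k_F^{3/2}}`, one has
`∫₀^∞ ‖û^t‖₂ ‖v̂^t‖₂ dt ≤ C k_F^{1/2}`, where
`‖û^t‖₂² = (1/L³) ∑_k w(k)² e^{−2t(|k|²−k_F²)}` and
`‖v̂^t‖₂² = (1/L³) ∑_k η(k)² e^{−2t(k_F²−|k|²)}`.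
-/

noncomputable section

open Real MeasureTheory

abbrev E3 : Type := EuclideanSpace ℝ (Fin 3)

/-- The momentum lattice point `(2π/L)·n` of `Λ*_L`, for `n ∈ ℤ³`. -/
def momVec (L : ℝ) (n : Fin 3 → ℤ) : E3 :=
  ∑ j : Fin 3, (2 * π / L * (n j : ℝ)) • EuclideanSpace.single j (1 : ℝ)

/-- The Euclidean norm `|k|` of the lattice point `(2π/L)·n`. -/
def knorm (L : ℝ) (n : Fin 3 → ℤ) : ℝ := ‖momVec L n‖

set_option maxHeartbeats 2000000 in
lemma momVec_apply (L : ℝ) (n : Fin 3 → ℤ) (j : Fin 3) :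
    momVec L n j = 2 * π / L * (n j : ℝ) := by
  rw [momVec]
  rw [show (∑ i : Fin 3, (2 * π / L * (n i : ℝ)) • EuclideanSpace.single i (1 : ℝ)) j
      = EuclideanSpace.proj (𝕜 := ℝ) j
        (∑ i : Fin 3, (2 * π / L * (n i : ℝ)) • EuclideanSpace.single i (1 : ℝ)) from rfl]
  rw [map_sum]
  simp [EuclideanSpace.single_apply]

lemma abs_coord_le_norm (x : E3) (j : Fin 3) : |x j| ≤ ‖x‖ := by
  rw [EuclideanSpace.norm_eq, ← Real.sqrt_sq_eq_abs]
  apply Real.sqrt_le_sqrt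
  have := Finset.single_le_sum (f := fun i => ‖x i‖ ^ 2) (fun i _ => sq_nonneg _) (Finset.mem_univ j)
  simpa [Real.norm_eq_abs, sq_abs] using this

set_option maxHeartbeats 2000000 in
theorem time_integral_heat_kernel_bound :
    ∃ C : ℝ, 0 < C ∧
      ∀ kF : ℝ, kF ∈ Set.Ioc (0 : ℝ) 1 → ∀ L : ℝ, 1 / kF ≤ L →
        ∀ w η : (Fin 3 → ℤ) → ℝ,
          (∀ n, w n ∈ Set.Icc (0 : ℝ) 1) →
          (∀ n, η n ∈ Set.Icc (0 : ℝ) 1) →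
          (∀ n, ¬(kF + kF ^ ((3 : ℝ) / 2) ≤ knorm L n ∧ knorm L n ≤ 3 * kF) → w n = 0) →
          (∀ n, ¬(knorm L n ≤ kF - kF ^ ((3 : ℝ) / 2)) → η n = 0) →
          (∫⁻ t in Set.Ioi (0 : ℝ),
              ENNReal.ofReal
                (Real.sqrt ((1 / L ^ 3) *
                    ∑' n : Fin 3 → ℤ, w n ^ 2 * Real.exp (-2 * t * (knorm L n ^ 2 - kF ^ 2))) *
                  Real.sqrt ((1 / L ^ 3) *
                    ∑' n : Fin 3 → ℤ, η n ^ 2 * Real.exp (-2 * t * (kF ^ 2 - knorm L n ^ 2)))))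
            ≤ ENNReal.ofReal (C * kF ^ ((1 : ℝ) / 2)) := by
  refine ⟨108, by norm_num, ?_⟩
  rintro kF ⟨hkF0, hkF1⟩ L hL w η hw hη hwsupp hηsupp
  have hL0 : 0 < L := lt_of_lt_of_le (by positivity) hL
  have hkFL : 1 ≤ kF * L := by
    rw [div_le_iff₀ hkF0] at hL; linarith [hL]
  set ε : ℝ := kF ^ ((3 : ℝ) / 2) with hε
  have hε0 : 0 < ε := Real.rpow_pos_of_pos hkF0 _
  have hεkF : ε ≤ kF := by
    calc ε ≤ kF ^ (1 : ℝ) := Real.rpow_le_rpow_of_exponent_ge hkF0 hkF1 (by norm_num)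
    _ = kF := Real.rpow_one kF
  set b : ℝ := kF ^ ((5 : ℝ) / 2) with hb
  have hb0 : 0 < b := Real.rpow_pos_of_pos hkF0 _
  have hkFε : kF * ε = b := by
    have h := Real.rpow_add hkF0 1 ((3:ℝ)/2)
    rw [Real.rpow_one] at h
    norm_num at h
    rw [hε, hb, ← h]
  set N : ℕ := ⌈kF * L⌉₊ with hN
  have hN1 : 1 ≤ N := Nat.one_le_iff_ne_zero.mpr (by
    simp only [hN, ne_eq, Nat.ceil_eq_zero, not_le]; linarith)
  have hNle : (N : ℝ) ≤ 2 * (kF * L) := by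
    have := Nat.ceil_lt_add_one (le_of_lt (by positivity : (0:ℝ) < kF * L))
    have : (N : ℝ) < kF * L + 1 := this
    linarith
  set S : Finset (Fin 3 → ℤ) := Fintype.piFinset (fun _ : Fin 3 => Finset.Icc (-(N : ℤ)) N) with hS
  have hScard : (S.card : ℝ) ≤ 216 * (kF * L) ^ 3 := by
    have hcard : S.card = (2 * N + 1) ^ 3 := by
      rw [hS, Fintype.card_piFinset]
      rw [Finset.prod_const, Finset.card_univ, Fintype.card_fin]
      congr 1
      rw [Int.card_Icc]
      omega
    rw [hcard]
    push_cast
    have h1 : (2 * (N:ℝ) + 1) ≤ 6 * (kF * L) := by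
      have : (1 : ℝ) ≤ N := by exact_mod_cast hN1
      linarith
    calc (2 * (N:ℝ) + 1) ^ 3 ≤ (6 * (kF * L)) ^ 3 :=
          pow_le_pow_left₀ (by positivity) h1 3
      _ = 216 * (kF * L) ^ 3 := by ring
  have hmem : ∀ n : Fin 3 → ℤ, knorm L n ≤ 3 * kF → n ∈ S := by
    intro n hn
    rw [hS, Fintype.mem_piFinset]
    intro j
    have h1 : |momVec L n j| ≤ knorm L n := abs_coord_le_norm _ j
    rw [momVec_apply] at h1
    have h2 : |2 * π / L * (n j : ℝ)| = 2 * π / L * |(n j : ℝ)| := by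
      rw [abs_mul]; congr 1; exact abs_of_pos (by positivity)
    rw [h2] at h1
    have hπ := Real.pi_gt_three
    have h3 : |(n j : ℝ)| ≤ (N : ℝ) := by
      have hNge : kF * L ≤ (N : ℝ) := Nat.le_ceil _
      have h4 : 2 * π * |(n j : ℝ)| ≤ 3 * kF * L := by
        have := mul_le_mul_of_nonneg_right (h1.trans hn) (le_of_lt hL0)
        have hLne : L ≠ 0 := ne_of_gt hL0
        calc 2 * π * |(n j : ℝ)| = 2 * π / L * |(n j : ℝ)| * L := by field_simp
          _ ≤ 3 * kF * L := by nlinarith [abs_nonneg ((n j : ℝ))]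
      nlinarith [abs_nonneg ((n j : ℝ))]
    rw [Finset.mem_Icc]
    have h5 : |(n j : ℝ)| ≤ ((N : ℤ) : ℝ) := by exact_mod_cast h3
    have h6 : |n j| ≤ (N : ℤ) := by exact_mod_cast h5
    rw [abs_le] at h6
    exact h6
  -- sum bounds
  have hA : ∀ t : ℝ, 0 ≤ t →
      (∑' n : Fin 3 → ℤ, w n ^ 2 * Real.exp (-2 * t * (knorm L n ^ 2 - kF ^ 2)))
        ≤ (S.card : ℝ) * Real.exp (-(4 * b) * t) := by
    intro t ht
    have h0 : ∀ n ∉ S, w n ^ 2 * Real.exp (-2 * t * (knorm L n ^ 2 - kF ^ 2)) = 0 := by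
      intro n hn
      have : w n = 0 := by
        apply hwsupp
        intro hc
        exact hn (hmem n hc.2)
      simp [this]
    rw [tsum_eq_sum h0]
    have hbound : ∀ n ∈ S, w n ^ 2 * Real.exp (-2 * t * (knorm L n ^ 2 - kF ^ 2))
        ≤ Real.exp (-(4 * b) * t) := by
      intro n _
      by_cases hc : kF + ε ≤ knorm L n ∧ knorm L n ≤ 3 * kF
      · have hw1 : w n ^ 2 ≤ 1 := by
          have := hw n
          nlinarith [this.1, this.2]
        have hgap : 2 * b ≤ knorm L n ^ 2 - kF ^ 2 := by
          have h5 : (kF + ε) ^ 2 ≤ knorm L n ^ 2 :=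
            pow_le_pow_left₀ (by positivity) hc.1 2
          nlinarith [sq_nonneg ε, hkFε]
        have hexp : Real.exp (-2 * t * (knorm L n ^ 2 - kF ^ 2)) ≤ Real.exp (-(4 * b) * t) := by
          apply Real.exp_le_exp.mpr
          nlinarith [mul_le_mul_of_nonneg_left hgap ht]
        calc w n ^ 2 * Real.exp (-2 * t * (knorm L n ^ 2 - kF ^ 2))
            ≤ 1 * Real.exp (-(4 * b) * t) := by
              apply mul_le_mul hw1 hexp (Real.exp_pos _).le (by norm_num)
          _ = _ := one_mul _
      · rw [hwsupp n hc]
        simpa using (Real.exp_pos (-(4 * b) * t)).le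
    calc (∑ n ∈ S, w n ^ 2 * Real.exp (-2 * t * (knorm L n ^ 2 - kF ^ 2)))
        ≤ S.card • Real.exp (-(4 * b) * t) := Finset.sum_le_card_nsmul S _ _ hbound
      _ = (S.card : ℝ) * Real.exp (-(4 * b) * t) := by rw [nsmul_eq_mul]
  have hB : ∀ t : ℝ, 0 ≤ t →
      (∑' n : Fin 3 → ℤ, η n ^ 2 * Real.exp (-2 * t * (kF ^ 2 - knorm L n ^ 2)))
        ≤ (S.card : ℝ) := by
    intro t ht
    have h0 : ∀ n ∉ S, η n ^ 2 * Real.exp (-2 * t * (kF ^ 2 - knorm L n ^ 2)) = 0 := by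
      intro n hn
      have : η n = 0 := by
        apply hηsupp
        intro hc
        exact hn (hmem n (by nlinarith [hε0]))
      simp [this]
    rw [tsum_eq_sum h0]
    have hbound : ∀ n ∈ S, η n ^ 2 * Real.exp (-2 * t * (kF ^ 2 - knorm L n ^ 2)) ≤ 1 := by
      intro n _
      by_cases hc : knorm L n ≤ kF - ε
      · have hηn : η n ^ 2 ≤ 1 := by
          have := hη n
          nlinarith [this.1, this.2]
        have hk0 : 0 ≤ knorm L n := norm_nonneg _
        have hksq : knorm L n ^ 2 ≤ kF ^ 2 := by nlinarith
        have hexp : Real.exp (-2 * t * (kF ^ 2 - knorm L n ^ 2)) ≤ 1 := by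
          apply Real.exp_le_one_iff.mpr
          nlinarith
        nlinarith [Real.exp_pos (-2 * t * (kF ^ 2 - knorm L n ^ 2)), sq_nonneg (η n)]
      · rw [hηsupp n hc]
        norm_num
    calc (∑ n ∈ S, η n ^ 2 * Real.exp (-2 * t * (kF ^ 2 - knorm L n ^ 2)))
        ≤ S.card • (1 : ℝ) := Finset.sum_le_card_nsmul S _ _ hbound
      _ = (S.card : ℝ) := by rw [nsmul_eq_mul, mul_one]
  -- pointwise bound
  set P : ℝ := 216 * kF ^ 3 with hP
  have hP0 : 0 < P := by positivity
  have hpt : ∀ t ∈ Set.Ioi (0 : ℝ),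
      ENNReal.ofReal
        (Real.sqrt ((1 / L ^ 3) *
            ∑' n : Fin 3 → ℤ, w n ^ 2 * Real.exp (-2 * t * (knorm L n ^ 2 - kF ^ 2))) *
          Real.sqrt ((1 / L ^ 3) *
            ∑' n : Fin 3 → ℤ, η n ^ 2 * Real.exp (-2 * t * (kF ^ 2 - knorm L n ^ 2))))
        ≤ ENNReal.ofReal (P * Real.exp (-(2 * b) * t)) := by
    intro t ht
    have ht0 : (0 : ℝ) ≤ t := le_of_lt ht
    apply ENNReal.ofReal_le_ofReal
    have hfrac : (0 : ℝ) < 1 / L ^ 3 := by positivity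
    have hcardexp : (1 / L ^ 3) * ((S.card : ℝ) * Real.exp (-(4 * b) * t)) ≤ P * Real.exp (-(4 * b) * t) := by
      have := mul_le_mul_of_nonneg_right hScard (Real.exp_pos (-(4 * b) * t)).le
      have heq : (1 / L ^ 3) * (216 * (kF * L) ^ 3 * Real.exp (-(4 * b) * t))
          = P * Real.exp (-(4 * b) * t) := by
        rw [hP]; field_simp
      calc (1 / L ^ 3) * ((S.card : ℝ) * Real.exp (-(4 * b) * t))
          ≤ (1 / L ^ 3) * (216 * (kF * L) ^ 3 * Real.exp (-(4 * b) * t)) := by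
            apply mul_le_mul_of_nonneg_left this hfrac.le
        _ = _ := heq
    have h1 : (1 / L ^ 3) * (∑' n : Fin 3 → ℤ, w n ^ 2 * Real.exp (-2 * t * (knorm L n ^ 2 - kF ^ 2)))
        ≤ P * Real.exp (-(4 * b) * t) := by
      refine le_trans (mul_le_mul_of_nonneg_left (hA t ht0) hfrac.le) hcardexp
    have h2 : (1 / L ^ 3) * (∑' n : Fin 3 → ℤ, η n ^ 2 * Real.exp (-2 * t * (kF ^ 2 - knorm L n ^ 2)))
        ≤ P := by
      refine le_trans (mul_le_mul_of_nonneg_left (hB t ht0) hfrac.le) ?_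
      calc (1 / L ^ 3) * (S.card : ℝ) ≤ (1 / L ^ 3) * (216 * (kF * L) ^ 3) :=
            mul_le_mul_of_nonneg_left hScard hfrac.le
        _ = P := by rw [hP]; field_simp
    calc Real.sqrt _ * Real.sqrt _
        ≤ Real.sqrt (P * Real.exp (-(4 * b) * t)) * Real.sqrt P :=
          mul_le_mul (Real.sqrt_le_sqrt h1) (Real.sqrt_le_sqrt h2)
            (Real.sqrt_nonneg _) (Real.sqrt_nonneg _)
      _ = Real.sqrt ((P * Real.exp (-(4 * b) * t)) * P) := (Real.sqrt_mul (by positivity) _).symm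
      _ = Real.sqrt ((P * Real.exp (-(2 * b) * t)) ^ 2) := by
          congr 1
          have he : Real.exp (-(4 * b) * t) = Real.exp (-(2 * b) * t) ^ 2 := by
            rw [sq, ← Real.exp_add]; ring_nf
          rw [he]; ring
      _ = P * Real.exp (-(2 * b) * t) := Real.sqrt_sq (by positivity)
  -- integrate
  have h2b : 0 < 2 * b := by positivity
  have hint : ∫ t in Set.Ioi (0:ℝ), Real.exp (-(2 * b) * t) = (2 * b)⁻¹ := by
    have := integral_comp_mul_left_Ioi (fun x => Real.exp (-x)) 0 h2b
    simp only [mul_zero, integral_exp_neg_Ioi, neg_zero, Real.exp_zero, smul_eq_mul, mul_one] at this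
    simpa [neg_mul] using this
  have hintegrable : IntegrableOn (fun t => P * Real.exp (-(2 * b) * t)) (Set.Ioi (0:ℝ)) := by
    exact (exp_neg_integrableOn_Ioi 0 h2b).const_mul P
  calc (∫⁻ t in Set.Ioi (0 : ℝ), ENNReal.ofReal
          (Real.sqrt ((1 / L ^ 3) *
              ∑' n : Fin 3 → ℤ, w n ^ 2 * Real.exp (-2 * t * (knorm L n ^ 2 - kF ^ 2))) *
            Real.sqrt ((1 / L ^ 3) *
              ∑' n : Fin 3 → ℤ, η n ^ 2 * Real.exp (-2 * t * (kF ^ 2 - knorm L n ^ 2)))))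
      ≤ ∫⁻ t in Set.Ioi (0:ℝ), ENNReal.ofReal (P * Real.exp (-(2 * b) * t)) := by
        have hmeas : Measurable fun t : ℝ => ENNReal.ofReal (P * Real.exp (-(2 * b) * t)) := by
          apply Measurable.ennreal_ofReal
          exact (Real.measurable_exp.comp (measurable_id.const_mul (-(2 * b)))).const_mul P
        exact setLIntegral_mono hmeas hpt
    _ = ENNReal.ofReal (∫ t in Set.Ioi (0:ℝ), P * Real.exp (-(2 * b) * t)) := by
        rw [← ofReal_integral_eq_lintegral_ofReal hintegrable]
        exact Filter.Eventually.of_forall fun t => by positivity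
    _ = ENNReal.ofReal (P * (2 * b)⁻¹) := by
        rw [MeasureTheory.integral_const_mul, hint]
    _ ≤ ENNReal.ofReal (108 * kF ^ ((1:ℝ)/2)) := by
        apply ENNReal.ofReal_le_ofReal
        have h3 : kF ^ (3:ℕ) = kF ^ ((5:ℝ)/2) * kF ^ ((1:ℝ)/2) := by
          rw [← Real.rpow_natCast kF 3, ← Real.rpow_add hkF0]; norm_num
        have hne : b ≠ 0 := hb0.ne'
        have heq : P * (2 * b)⁻¹ = 108 * kF ^ ((1:ℝ)/2) := by
          rw [hP, h3, hb.symm]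
          field_simp
          ring
        rw [heq]
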